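/- For an indexed tree T (an indexed forest consisting of a single tree) with support contained in the positive integers, let M = max(Supp(T)). Then the evaluation of the forest polynomial β_T at x_i = 1 for all i equals binomial(M, |T|) times the number of decreasing labelings of T, which also equals the number of decreasing labelings of T using distinct labels from {1,...,M}. -/

import Mathlib

/-- Plane binary trees. `leaf` is a leaf, `node l r` an internal node. -/
inductive BT where
  | leaf : BT
  | node : BT → BT → BT
deriving DecidableEq

/-- Number of internal nodes. -/
def BT.size : BT → ℕ
  | .leaf => 0
  | .node l r => l.size + r.size + 1

/-- Multiset of values `ρ_F(v)` (canonical label of the leftmost descendant,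
reached by following left edges) over the internal nodes of a tree whose
inorder canonical labels start at `a`. -/
def BT.rhoMS : BT → ℤ → Multiset ℤ
  | .leaf, _ => 0
  | .node l r, a => a ::ₘ (l.rhoMS a + r.rhoMS (a + l.size + 1))

/-- Multiset of canonical labels of internal nodes whose left child is a leaf
("left support"). -/
def BT.lsuppMS : BT → ℤ → Multiset ℤ
  | .leaf, _ => 0
  | .node l r, a =>
      (if l = BT.leaf then ({a} : Multiset ℤ) else 0) + l.lsuppMS a
        + r.lsuppMS (a + l.size + 1)

/-- The flagged generating polynomial of a binary tree with inorder labels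
starting at `a`, where every label is at least `lo` (lower bound transmitted
from the parent), at most the `ρ`-value of the node, labels weakly increase
down left edges and strictly increase down right edges. The variables are
`x_1, x_2, …` (the variable `X 0` is unused). -/
noncomputable def BT.polyAux : BT → ℤ → ℕ → MvPolynomial ℕ ℚ
  | .leaf, _, _ => 1
  | .node l r, a, lo =>
      ∑ k ∈ Finset.Icc lo a.toNat,
        MvPolynomial.X k * l.polyAux a k * r.polyAux (a + l.size + 1) (k + 1)

/-- The forest polynomial of a single indexed tree with support starting at `a`. -/
noncomputable def BT.poly (t : BT) (a : ℤ) : MvPolynomial ℕ ℚ := t.polyAux a 1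

/-- An indexed forest: a list of binary trees together with the starting points
of their supports, the supports being maximal intervals (consecutive supports
leave a gap of at least one integer). -/
structure IndexedForest where
  trees : List (ℤ × BT)
  nonempty : ∀ p ∈ trees, p.2 ≠ BT.leaf
  gaps : trees.Chain' (fun p q => p.1 + (p.2.size : ℤ) + 1 ≤ q.1)

/-- The support of an indexed forest, as a set of integers. -/
def IndexedForest.Supp (F : IndexedForest) : Set ℤ :=
  {i | ∃ p ∈ F.trees, p.1 ≤ i ∧ i < p.1 + (p.2.size : ℤ)}

/-- The multiset of `ρ_F`-values of all internal nodes of `F`. -/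
def IndexedForest.rhoMS (F : IndexedForest) : Multiset ℤ :=
  (F.trees.map (fun p => p.2.rhoMS p.1)).sum

/-- The `ℕ`-vector `c(F)`: `c_i` counts internal nodes with `ρ_F`-value `i`. -/
def cOf (F : IndexedForest) : ℤ → ℕ := fun i => F.rhoMS.count i

/-- The multiset of left-support labels of `F`. -/
def IndexedForest.lsuppMS (F : IndexedForest) : Multiset ℤ :=
  (F.trees.map (fun p => p.2.lsuppMS p.1)).sum

/-- Forest polynomial of a list of located trees. -/
noncomputable def polyL (ts : List (ℤ × BT)) : MvPolynomial ℕ ℚ :=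
  (ts.map (fun p => p.2.poly p.1)).prod

/-- The forest polynomial of an indexed forest. -/
noncomputable def IndexedForest.poly (F : IndexedForest) : MvPolynomial ℕ ℚ :=
  polyL F.trees

/-- Number of internal nodes of a forest. -/
def IndexedForest.size (F : IndexedForest) : ℕ :=
  (F.trees.map (fun p => p.2.size)).sum

/-- Generic labeled plane binary trees: internal nodes carry a label in `α`. -/
inductive GT (α : Type) where
  | leaf : GT α
  | node : α → GT α → GT α → GT α
deriving DecidableEq

/-- Underlying (unlabeled) shape. -/
def GT.shape {α : Type} : GT α → BT
  | .leaf => BT.leaf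
  | .node _ l r => BT.node l.shape r.shape

/-- Number of internal nodes. -/
def GT.size {α : Type} : GT α → ℕ
  | .leaf => 0
  | .node _ l r => l.size + r.size + 1

/-- Multiset of labels of internal nodes. -/
def GT.labels {α : Type} : GT α → Multiset α
  | .leaf => 0
  | .node k l r => k ::ₘ (l.labels + r.labels)

/-- Relabel a labeled tree. -/
def GT.map {α β : Type} (f : α → β) : GT α → GT β
  | .leaf => .leaf
  | .node k l r => .node (f k) (l.map f) (r.map f)

/-- The root label of a labeled tree (if any) is smaller than `k`. -/
def rootBelow (k : ℕ) : GT ℕ → Prop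
  | .leaf => True
  | .node m _ _ => m < k

/-- A decreasing labeling: labels strictly decrease away from the root. -/
def IsDec : GT ℕ → Prop
  | .leaf => True
  | .node k l r => rootBelow k l ∧ rootBelow k r ∧ IsDec l ∧ IsDec r

/-- Decreasing labelings of the shape `t` with distinct labels drawn from
`{1,…,M}`. -/
def DecSet (t : BT) (M : ℕ) : Set (GT ℕ) :=
  {L | L.shape = t ∧ IsDec L ∧ L.labels.Nodup ∧ ∀ m ∈ L.labels, 1 ≤ m ∧ m ≤ M}

namespace ForestAux

/-- Number of standard decreasing labelings of a shape. -/
def hBT : BT → ℕ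
  | .leaf => 1
  | .node l r => (l.size + r.size).choose l.size * hBT l * hBT r

lemma shape_size (L : GT ℕ) : L.shape.size = L.size := by
  induction L with
  | leaf => rfl
  | node k l r ihl ihr => simp [GT.shape, GT.size, BT.size, ihl, ihr]

lemma labels_card (L : GT ℕ) : Multiset.card L.labels = L.size := by
  induction L with
  | leaf => rfl
  | node k l r ihl ihr => simp [GT.labels, GT.size, ihl, ihr]

lemma labels_lt {L : GT ℕ} {k : ℕ} (hd : IsDec L) (hr : rootBelow k L) :
    ∀ m ∈ L.labels, m < k := by
  induction L generalizing k with
  | leaf => intro m hm; simp [GT.labels] at hm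
  | node j l r ihl ihr =>
    obtain ⟨h1, h2, h3, h4⟩ := hd
    have hjk : j < k := hr
    intro m hm
    simp only [GT.labels, Multiset.mem_cons, Multiset.mem_add] at hm
    rcases hm with rfl | hm | hm
    · exact hjk
    · exact lt_trans (ihl h3 h1 m hm) hjk
    · exact lt_trans (ihr h4 h2 m hm) hjk

/-- Decreasing labelings of shape `t` with label multiset exactly `S.val`. -/
def decF : BT → Finset ℕ → Finset (GT ℕ)
  | .leaf, S => if S = ∅ then {GT.leaf} else ∅
  | .node l r, S =>
      if hS : S.Nonempty then
        ((S.erase (S.max' hS)).powersetCard l.size).biUnion fun A =>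
          ((decF l A) ×ˢ (decF r ((S.erase (S.max' hS)) \ A))).image
            fun p => GT.node (S.max' hS) p.1 p.2
      else ∅

lemma mem_decF : ∀ (t : BT) (S : Finset ℕ) (L : GT ℕ), S.card = t.size →
    (L ∈ decF t S ↔ L.shape = t ∧ IsDec L ∧ L.labels = S.val) := by
  intro t
  induction t with
  | leaf =>
    intro S L hcard
    have hS : S = ∅ := Finset.card_eq_zero.mp hcard
    subst hS
    have hd : decF BT.leaf ∅ = {GT.leaf} := by simp [decF]
    rw [hd, Finset.mem_singleton]
    constructor
    · rintro rfl; exact ⟨rfl, trivial, rfl⟩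
    · rintro ⟨hsh, -, -⟩
      cases L with
      | leaf => rfl
      | node k l r => simp [GT.shape] at hsh
  | node l r ihl ihr =>
    intro S L hcard
    have hS : S.Nonempty := by
      rw [← Finset.card_pos, hcard]; simp [BT.size]
    simp only [decF]
    rw [dif_pos hS]
    set m := S.max' hS with hm
    have hmem : m ∈ S := S.max'_mem hS
    have hcard' : (S.erase m).card = l.size + r.size := by
      rw [Finset.card_erase_of_mem hmem, hcard]; simp [BT.size]
    simp only [Finset.mem_biUnion, Finset.mem_image, Finset.mem_product,
      Finset.mem_powersetCard, Prod.exists]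
    constructor
    · rintro ⟨A, ⟨hAsub, hAcard⟩, L1, L2, ⟨h1, h2⟩, rfl⟩
      have hBcard : ((S.erase m) \ A).card = r.size := by
        rw [Finset.card_sdiff_of_subset hAsub, hcard', hAcard]; omega
      obtain ⟨hs1, hd1, hl1⟩ := (ihl A L1 hAcard).mp h1
      obtain ⟨hs2, hd2, hl2⟩ := (ihr _ L2 hBcard).mp h2
      have hlt1 : ∀ x ∈ L1.labels, x < m := by
        intro x hx
        rw [hl1, Finset.mem_val] at hx
        have hx' := Finset.mem_erase.mp (hAsub hx)
        exact lt_of_le_of_ne (S.le_max' x hx'.2) hx'.1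
      have hlt2 : ∀ x ∈ L2.labels, x < m := by
        intro x hx
        rw [hl2, Finset.mem_val] at hx
        have hx' := Finset.mem_erase.mp (Finset.sdiff_subset hx)
        exact lt_of_le_of_ne (S.le_max' x hx'.2) hx'.1
      refine ⟨by simp [GT.shape, hs1, hs2], ⟨?_, ?_, hd1, hd2⟩, ?_⟩
      · cases L1 with
        | leaf => trivial
        | node k a b => exact hlt1 k (by simp [GT.labels])
      · cases L2 with
        | leaf => trivial
        | node k a b => exact hlt2 k (by simp [GT.labels])
      · have hA : A.val ≤ (S.erase m).val := Finset.val_le_iff.mpr hAsub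
        show m ::ₘ (L1.labels + L2.labels) = S.val
        rw [hl1, hl2, Finset.sdiff_val, add_tsub_cancel_of_le hA,
          Finset.erase_val, Multiset.cons_erase (Finset.mem_val.mpr hmem)]
    · rintro ⟨hsh, hd, hlab⟩
      cases L with
      | leaf => simp [GT.shape] at hsh
      | node k L1 L2 =>
        simp only [GT.shape, BT.node.injEq] at hsh
        obtain ⟨hs1, hs2⟩ := hsh
        obtain ⟨hr1, hr2, hd1, hd2⟩ := hd
        have hlab' : k ::ₘ (L1.labels + L2.labels) = S.val := hlab
        have hnodup : (k ::ₘ (L1.labels + L2.labels)).Nodup := by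
          rw [hlab']; exact S.nodup
        rw [Multiset.nodup_cons] at hnodup
        obtain ⟨hkn, hnd12⟩ := hnodup
        rw [Multiset.nodup_add] at hnd12
        obtain ⟨hnd1, hnd2, hdisj⟩ := hnd12
        have hkS : k ∈ S := by
          rw [← Finset.mem_val, ← hlab']; exact Multiset.mem_cons_self _ _
        have hkmax : ∀ x ∈ S, x ≤ k := by
          intro x hx
          rw [← Finset.mem_val, ← hlab'] at hx
          rcases Multiset.mem_cons.mp hx with rfl | hx'
          · exact le_refl _
          · rcases Multiset.mem_add.mp hx' with h | h
            · exact (labels_lt hd1 hr1 x h).le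
            · exact (labels_lt hd2 hr2 x h).le
        have hkm : k = m := le_antisymm (S.le_max' k hkS) (S.max'_le hS k hkmax)
        subst hkm
        set A := L1.labels.toFinset with hA
        have hAval : A.val = L1.labels := by
          rw [hA, Multiset.toFinset_val, Multiset.dedup_eq_self.mpr hnd1]
        have hAsub : A ⊆ S.erase m := by
          intro x hx
          rw [← Finset.mem_val, hAval] at hx
          refine Finset.mem_erase.mpr ⟨?_, ?_⟩
          · rintro rfl
            exact hkn (Multiset.mem_add.mpr (Or.inl hx))
          · rw [← Finset.mem_val, ← hlab']
            exact Multiset.mem_cons_of_mem (Multiset.mem_add.mpr (Or.inl hx))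
        have hAcard : A.card = l.size := by
          rw [Finset.card_def, hAval, labels_card, ← shape_size, hs1]
        have hErase : (S.erase m).val = L1.labels + L2.labels := by
          rw [Finset.erase_val, ← hlab', Multiset.erase_cons_head]
        have hBval : ((S.erase m) \ A).val = L2.labels := by
          rw [Finset.sdiff_val, hErase, hAval, add_tsub_cancel_left]
        have hBcard : ((S.erase m) \ A).card = r.size := by
          rw [Finset.card_def, hBval, labels_card, ← shape_size, hs2]
        refine ⟨A, ⟨hAsub, hAcard⟩, L1, L2, ⟨?_, ?_⟩, rfl⟩
        · exact (ihl A L1 hAcard).mpr ⟨hs1, hd1, hAval.symm⟩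
        · exact (ihr _ L2 hBcard).mpr ⟨hs2, hd2, hBval.symm⟩

lemma card_decF : ∀ (t : BT) (S : Finset ℕ), S.card = t.size →
    (decF t S).card = hBT t := by
  intro t
  induction t with
  | leaf =>
    intro S h
    rw [Finset.card_eq_zero.mp h]
    simp [decF, hBT]
  | node l r ihl ihr =>
    intro S hcard
    have hS : S.Nonempty := by
      rw [← Finset.card_pos, hcard]; simp [BT.size]
    simp only [decF]
    rw [dif_pos hS]
    set m := S.max' hS with hm
    have hmem : m ∈ S := S.max'_mem hS
    have hcard' : (S.erase m).card = l.size + r.size := by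
      rw [Finset.card_erase_of_mem hmem, hcard]; simp [BT.size]
    rw [Finset.card_biUnion]
    · have hterm : ∀ A ∈ (S.erase m).powersetCard l.size,
          (((decF l A) ×ˢ (decF r ((S.erase m) \ A))).image
            fun p => GT.node m p.1 p.2).card = hBT l * hBT r := by
        intro A hA
        obtain ⟨hAsub, hAcard⟩ := Finset.mem_powersetCard.mp hA
        have hBcard : ((S.erase m) \ A).card = r.size := by
          rw [Finset.card_sdiff_of_subset hAsub, hcard', hAcard]; omega
        rw [Finset.card_image_of_injective _ (fun p q h => by
          simp only [GT.node.injEq] at h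
          exact Prod.ext h.2.1 h.2.2)]
        rw [Finset.card_product, ihl A hAcard, ihr _ hBcard]
      rw [Finset.sum_congr rfl hterm, Finset.sum_const, Finset.card_powersetCard,
        hcard', smul_eq_mul]
      simp only [hBT, BT.size]
      ring
    · intro A hA A' hA' hne
      rw [Function.onFun, Finset.disjoint_left]
      intro L hL hL'
      obtain ⟨hAsub, hAcard⟩ := Finset.mem_powersetCard.mp hA
      obtain ⟨hA'sub, hA'card⟩ := Finset.mem_powersetCard.mp hA'
      obtain ⟨⟨L1, L2⟩, hp, hLe⟩ := Finset.mem_image.mp hL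
      obtain ⟨⟨L1', L2'⟩, hp', hLe'⟩ := Finset.mem_image.mp hL'
      rw [Finset.mem_product] at hp hp'
      have h1 := (mem_decF l A L1 hAcard).mp hp.1
      have h1' := (mem_decF l A' L1' hA'card).mp hp'.1
      rw [← hLe'] at hLe
      simp only [GT.node.injEq] at hLe
      apply hne
      apply Finset.val_injective
      rw [← h1.2.2, ← h1'.2.2, hLe.2.1]

lemma ncard_DecSet (t : BT) (M : ℕ) :
    (DecSet t M).ncard = M.choose t.size * hBT t := by
  have hset : DecSet t M
      = ↑(((Finset.Icc 1 M).powersetCard t.size).biUnion (decF t)) := by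
    ext L
    rw [Finset.mem_coe, Finset.mem_biUnion]
    simp only [DecSet, Set.mem_setOf_eq]
    constructor
    · rintro ⟨hsh, hd, hnd, hbd⟩
      refine ⟨L.labels.toFinset, ?_, ?_⟩
      · rw [Finset.mem_powersetCard]
        constructor
        · intro x hx
          rw [Multiset.mem_toFinset] at hx
          rw [Finset.mem_Icc]
          exact hbd x hx
        · rw [Finset.card_def, Multiset.toFinset_val,
            Multiset.dedup_eq_self.mpr hnd, labels_card, ← shape_size, hsh]
      · refine (mem_decF t _ L ?_).mpr ⟨hsh, hd, ?_⟩
        · rw [Finset.card_def, Multiset.toFinset_val,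
            Multiset.dedup_eq_self.mpr hnd, labels_card, ← shape_size, hsh]
        · rw [Multiset.toFinset_val, Multiset.dedup_eq_self.mpr hnd]
    · rintro ⟨S, hSmem, hmem⟩
      obtain ⟨hsub, hcardS⟩ := Finset.mem_powersetCard.mp hSmem
      obtain ⟨hsh, hd, hlab⟩ := (mem_decF t S L hcardS).mp hmem
      refine ⟨hsh, hd, ?_, ?_⟩
      · rw [hlab]; exact S.nodup
      · intro x hx
        rw [hlab, Finset.mem_val] at hx
        exact Finset.mem_Icc.mp (hsub hx)
  rw [hset, Set.ncard_coe_finset]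
  rw [Finset.card_biUnion]
  · have hterm : ∀ S ∈ (Finset.Icc 1 M).powersetCard t.size,
        (decF t S).card = hBT t := by
      intro S hSmem
      exact card_decF t S (Finset.mem_powersetCard.mp hSmem).2
    rw [Finset.sum_congr rfl hterm, Finset.sum_const, Finset.card_powersetCard,
      Nat.card_Icc, smul_eq_mul]
    congr 2
  · intro S hS S' hS' hne
    rw [Function.onFun, Finset.disjoint_left]
    intro L hL hL'
    have h1 := (mem_decF t S L (Finset.mem_powersetCard.mp hS).2).mp hL
    have h1' := (mem_decF t S' L (Finset.mem_powersetCard.mp hS').2).mp hL'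
    apply hne
    apply Finset.val_injective
    rw [← h1.2.2, ← h1'.2.2]

lemma term_id (j p q : ℕ) :
    (j + p).choose p * (j + p + q).choose q
      = (p + q).choose p * (j + p + q).choose (p + q) := by
  have h := Nat.choose_mul (n := j + p + q) (k := j + p) (s := j)
    (by omega)
  have e1 : (j + p).choose p = (j + p).choose j := Nat.choose_symm_add.symm
  have e2 : (j + p + q).choose q = (j + p + q).choose (j + p) :=
    (Nat.choose_symm_of_eq_add (show j + p + q = (j + p) + q by ring)).symm
  have e3 : (j + p + q).choose j = (j + p + q).choose (p + q) :=
    Nat.choose_symm_of_eq_add (show j + p + q = j + (p + q) by ring)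
  have e4 : j + p + q - j = p + q := by omega
  have e5 : j + p - j = p := by omega
  calc (j + p).choose p * (j + p + q).choose q
      = (j + p + q).choose (j + p) * (j + p).choose j := by rw [e1, e2]; ring
    _ = (j + p + q).choose j * (j + p + q - j).choose (j + p - j) := h
    _ = (p + q).choose p * (j + p + q).choose (p + q) := by
        rw [e3, e4, e5]; ring

lemma sum_id (p q lo A : ℕ) (h : lo ≤ A) :
    ∑ k ∈ Finset.Icc lo A, (A - k + p).choose p * (A - k + p + q).choose q
      = (A - lo + p + q + 1).choose (p + q + 1) * (p + q).choose p := by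
  have step : ∀ k ∈ Finset.Icc lo A,
      (A - k + p).choose p * (A - k + p + q).choose q
        = (p + q).choose p * (A - k + p + q).choose (p + q) :=
    fun k _ => term_id _ p q
  rw [Finset.sum_congr rfl step, ← Finset.mul_sum]
  have hre : ∑ k ∈ Finset.Icc lo A, (A - k + p + q).choose (p + q)
      = ∑ i ∈ Finset.Icc (p + q) (A - lo + p + q), i.choose (p + q) := by
    apply Finset.sum_nbij' (i := fun k => A - k + p + q) (j := fun i => A + p + q - i)
    · intro k hk
      rw [Finset.mem_Icc] at hk ⊢
      omega
    · intro i hi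
      rw [Finset.mem_Icc] at hi ⊢
      omega
    · intro k hk
      rw [Finset.mem_Icc] at hk
      omega
    · intro i hi
      rw [Finset.mem_Icc] at hi
      omega
    · intro k hk
      rfl
  rw [hre, Nat.sum_Icc_choose]
  ring

lemma eval_polyAux : ∀ (t : BT) (a : ℤ) (lo : ℕ), (lo : ℤ) ≤ a →
    MvPolynomial.eval (fun _ => (1 : ℚ)) (t.polyAux a lo)
      = (((a.toNat - lo + t.size).choose t.size * hBT t : ℕ) : ℚ) := by
  intro t
  induction t with
  | leaf => intro a lo h; simp [BT.polyAux, BT.size, hBT]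
  | node l r ihl ihr =>
    intro a lo h
    have ha0 : (0 : ℤ) ≤ a := le_trans (by positivity) h
    have hloA : lo ≤ a.toNat := by omega
    rw [BT.polyAux, map_sum]
    have hterm : ∀ k ∈ Finset.Icc lo a.toNat,
        MvPolynomial.eval (fun _ => (1 : ℚ))
            (MvPolynomial.X k * l.polyAux a k * r.polyAux (a + l.size + 1) (k + 1))
          = ((((a.toNat - k + l.size).choose l.size
              * (a.toNat - k + l.size + r.size).choose r.size)
              * (hBT l * hBT r) : ℕ) : ℚ) := by
      intro k hk
      rw [Finset.mem_Icc] at hk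
      rw [map_mul, map_mul, MvPolynomial.eval_X, one_mul]
      rw [ihl a k (by omega), ihr (a + l.size + 1) (k + 1) (by push_cast; omega)]
      have h1 : (a + (l.size : ℤ) + 1).toNat - (k + 1) + r.size
          = a.toNat - k + l.size + r.size := by omega
      rw [h1]
      push_cast
      ring
    rw [Finset.sum_congr rfl hterm, ← Nat.cast_sum]
    congr 1
    rw [← Finset.sum_mul, sum_id l.size r.size lo a.toNat hloA]
    simp only [hBT, BT.size]
    ring

end ForestAux

/-- For an indexed tree `T` with support `[a, M] ⊆ ℤ≥1`
(`M = a + |T| - 1`), the principal specialization `β_T(1,1,…)` equals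
`binom(M, |T|)` times the number of decreasing labelings of `T`, which also
equals the number of decreasing labelings of `T` with distinct labels from
`{1,…,M}`. -/
theorem forest_poly_all_ones (t : BT) (a M : ℤ) (ht : t ≠ BT.leaf)
    (ha : 1 ≤ a) (hM : M = a + (t.size : ℤ) - 1) :
    (MvPolynomial.eval (fun _ => (1 : ℚ)) (t.poly a)
        = (M.toNat.choose t.size : ℚ) * ((DecSet t t.size).ncard : ℚ)) ∧
    (MvPolynomial.eval (fun _ => (1 : ℚ)) (t.poly a)
        = ((DecSet t M.toNat).ncard : ℚ)) := by
  have hn : 1 ≤ t.size := by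
    cases t with
    | leaf => exact absurd rfl ht
    | node l r => simp [BT.size]
  have hE := ForestAux.eval_polyAux t a 1 ha
  have hchoose : a.toNat - 1 + t.size = M.toNat := by omega
  rw [BT.poly] at *
  constructor
  · rw [hE, hchoose, ForestAux.ncard_DecSet t t.size, Nat.choose_self, one_mul]
    push_cast
    ring
  · rw [hE, hchoose, ForestAux.ncard_DecSet t M.toNat]
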